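/- arXiv:1906.07179 — 3 statements merged into one kernel-verified Lean document; each statement's English description precedes it below -/
import Mathlib

section
/- Let $R$ be a ring, and let $B_1, B_2, B_2', B_2'' \in M_n(R)$ satisfy $B_2 = B_2' + B_2''$, $(B_2')^2 = 0$, $B_2'' B_2' = 0$, and $B_2 B_1 = 0$, and suppose $I - B_1$, $I - B_2''$ are invertible. Then $I - B_1 - B_2$ is invertible and $(I - B_1 - B_2)^{-1} = (I-B_1)^{-1}(I + B_2')(I - B_2'')^{-1}$. -/
/-- If `B₂ = B₂' + B₂''`, `(B₂')² = 0`, `B₂'' B₂' = 0`, `B₂ B₁ = 0`, and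
`I - B₁`, `I - B₂''` are invertible, then `I - B₁ - B₂` is invertible with inverse
`(I - B₁)⁻¹ (I + B₂') (I - B₂'')⁻¹`. -/
theorem stmt7 {R : Type*} [Ring R] {n : ℕ}
    (B₁ B₂ B₂' B₂'' : Matrix (Fin n) (Fin n) R)
    (hsum : B₂ = B₂' + B₂'') (hsq : B₂' ^ 2 = 0) (h21 : B₂'' * B₂' = 0)
    (h0 : B₂ * B₁ = 0) (h1 : IsUnit (1 - B₁)) (h2 : IsUnit (1 - B₂'')) :
    IsUnit (1 - B₁ - B₂) ∧
      Ring.inverse (1 - B₁ - B₂) =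
        Ring.inverse (1 - B₁) * (1 + B₂') * Ring.inverse (1 - B₂'') := by
  have hsq' : B₂' * B₂' = 0 := by rw [← sq]; exact hsq
  have e1 : (1 - B₂'') * (1 - B₂') = 1 - B₂ := by
    rw [hsum]
    simp only [mul_sub, sub_mul, one_mul, mul_one, h21]
    abel
  have e2 : (1 - B₂) * (1 - B₁) = 1 - B₁ - B₂ := by
    simp only [mul_sub, sub_mul, one_mul, mul_one, h0]
    abel
  have hfact : (1 : Matrix (Fin n) (Fin n) R) - B₁ - B₂ =
      (1 - B₂'') * (1 - B₂') * (1 - B₁) := by rw [e1, e2]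
  have m1 : (1 - B₂') * (1 + B₂') = 1 := by
    simp only [mul_add, sub_mul, add_mul, mul_sub, one_mul, mul_one, hsq']
    abel
  have m2 : (1 + B₂') * (1 - B₂') = 1 := by
    simp only [mul_add, sub_mul, add_mul, mul_sub, one_mul, mul_one, hsq']
    abel
  let u3 : (Matrix (Fin n) (Fin n) R)ˣ := ⟨1 - B₂', 1 + B₂', m1, m2⟩
  let u := h2.unit * u3 * h1.unit
  have hu : u.val = 1 - B₁ - B₂ := by
    simp only [u, u3, Units.val_mul, Units.val_mk, h1.unit_spec, h2.unit_spec, hfact]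
  have i1 : Ring.inverse (1 - B₁) = (h1.unit⁻¹).val := by
    conv_lhs => rw [← h1.unit_spec]
    exact Ring.inverse_unit h1.unit
  have i2 : Ring.inverse (1 - B₂'') = (h2.unit⁻¹).val := by
    conv_lhs => rw [← h2.unit_spec]
    exact Ring.inverse_unit h2.unit
  refine ⟨hu ▸ u.isUnit, ?_⟩
  rw [← hu, Ring.inverse_unit, i1, i2]
  simp only [u, u3, mul_inv_rev, Units.inv_mk, Units.val_mul, Units.val_mk, mul_assoc]
end

section
/- Let $(I,\le)$ be a finite poset that is a tree, and let $\mathbf{K} = \{K_i\}_{i \in I}$ be a poset of fields over $I$, i.e., a family of fields with $K_i \subseteq K_j$ whenever $j \le i$. Then there exists a field $K$ and a family of field embeddings $\varphi_i \colon K_i \to K$ such that $\varphi_i|_{K_j} = \varphi_j$ whenever $i \le j$. -/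
open TensorProduct in
lemma amalg {A B C : Type} [Field A] [Field B] [Field C] (f : A →+* B) (g : A →+* C) :
    ∃ (D : Type) (_ : Field D) (fb : B →+* D) (fc : C →+* D), fb.comp f = fc.comp g := by
  letI : Algebra A B := f.toAlgebra
  letI : Algebra A C := g.toAlgebra
  haveI : Nontrivial (B ⊗[A] C) := inferInstance
  obtain ⟨M, hM⟩ := Ideal.exists_maximal (B ⊗[A] C)
  letI : Field ((B ⊗[A] C) ⧸ M) := Ideal.Quotient.field M
  refine ⟨(B ⊗[A] C) ⧸ M, inferInstance, (Ideal.Quotient.mk M).comp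
    (Algebra.TensorProduct.includeLeft (S := A)).toRingHom,
    (Ideal.Quotient.mk M).comp (Algebra.TensorProduct.includeRight).toRingHom, ?_⟩
  ext a
  show Ideal.Quotient.mk M ((f a) ⊗ₜ[A] 1) = Ideal.Quotient.mk M (1 ⊗ₜ[A] (g a))
  congr 1
  have : (f a) ⊗ₜ[A] (1 : C) = algebraMap A (B ⊗[A] C) a := rfl
  rw [this, Algebra.TensorProduct.algebraMap_apply']
  rfl

lemma stmt9_aux (n : ℕ) : ∀ (I : Type) [PartialOrder I] [Fintype I], Fintype.card I ≤ n →
    ∀ (i0 : I), (∀ i : I, i ≤ i0) →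
    (∀ i : I, IsChain (· ≤ ·) {j : I | i ≤ j ∧ j ≤ i0}) →
    ∀ (F : I → Type) (_ : ∀ i, Field (F i))
    (ι : ∀ i j : I, i ≤ j → (F j →+* F i)),
    (∀ i : I, ι i i le_rfl = RingHom.id (F i)) →
    (∀ (i j k : I) (hij : i ≤ j) (hjk : j ≤ k),
      (ι i j hij).comp (ι j k hjk) = ι i k (hij.trans hjk)) →
    ∃ (K : Type) (_ : Field K) (φ : ∀ i : I, F i →+* K),
      ∀ (i j : I) (h : i ≤ j), (φ i).comp (ι i j h) = φ j := by
  induction n with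
  | zero =>
    intro I _ _ hcard i0
    exact absurd (Fintype.card_pos_iff.mpr ⟨i0⟩) (by omega)
  | succ n ih =>
    intro I _ _ hcard i0 hmax htree F _ ι hrefl htrans
    classical
    by_cases hall : ∀ i : I, i0 ≤ i
    · -- constant solution
      refine ⟨F i0, inferInstance, fun i => ι i0 i (hall i), fun i j h => htrans i0 i j (hall i) h⟩
    · -- pick a minimal element m ≠ i0
      push_neg at hall
      obtain ⟨x, hx⟩ := hall
      have hxne : x ≠ i0 := fun h => hx (h ▸ le_rfl)
      obtain ⟨m, hmmem, hmmin⟩ := (Finset.univ.filter (· ≠ i0)).exists_minimal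
        ⟨x, by simp [hxne]⟩
      simp only [Finset.mem_filter, Finset.mem_univ, true_and] at hmmem
      have hmin : ∀ y : I, ¬ y < m := by
        intro y hy
        have hyne : y ≠ i0 := by
          rintro rfl
          exact absurd (lt_of_lt_of_le hy (hmax m)) (lt_irrefl _)
        exact lt_irrefl _ (lt_of_lt_of_le hy (hmmin (y := y) (by simp [hyne]) hy.le))
      -- least element p above m
      have hmi0 : m < i0 := lt_of_le_of_ne (hmax m) hmmem
      obtain ⟨p, hpmem, hpmin⟩ := (Finset.univ.filter (m < ·)).exists_minimal
        ⟨i0, by simp [hmi0]⟩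
      simp only [Finset.mem_filter, Finset.mem_univ, true_and] at hpmem
      have hpleast : ∀ j : I, m < j → p ≤ j := by
        intro j hj
        have hpc : p ∈ {j : I | m ≤ j ∧ j ≤ i0} := ⟨hpmem.le, hmax p⟩
        have hjc : j ∈ {j : I | m ≤ j ∧ j ≤ i0} := ⟨hj.le, hmax j⟩
        rcases eq_or_ne p j with rfl | hne
        · exact le_rfl
        · rcases htree m hpc hjc hne with h | h
          · exact h
          · exact absurd (lt_of_le_of_ne h hne.symm) (fun hlt => lt_irrefl _ (lt_of_lt_of_le hlt (hpmin (y := j) (by simp [hj]) h)))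
      have hpm : p ≠ m := fun h => absurd (h ▸ hpmem) (lt_irrefl m)
      have hmne : m ≠ i0 := hmmem
      have hcard' : Fintype.card {x : I // x ≠ m} ≤ n := by
        have h2 : Fintype.card {x : I // x ≠ m} < Fintype.card I :=
          Fintype.card_subtype_lt (x := m) (by simp)
        omega
      obtain ⟨K, _, φ', hφ'⟩ := ih {x : I // x ≠ m} hcard' ⟨i0, Ne.symm hmne⟩
        (fun i => Subtype.coe_le_coe.mp (hmax i.1))
        (fun i => by
          intro a ha b hb hab
          have := htree i.1 ⟨ha.1, ha.2⟩ ⟨hb.1, hb.2⟩ (fun hh => hab (Subtype.ext hh))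
          exact this.imp Subtype.coe_le_coe.mp Subtype.coe_le_coe.mp)
        (fun i => F i.1) (fun i => inferInstance)
        (fun i j h => ι i.1 j.1 h)
        (fun i => hrefl i.1)
        (fun i j k hij hjk => htrans i.1 j.1 k.1 hij hjk)
      -- amalgamate F m with K over F p
      obtain ⟨K'', _, ψ0, e, hcomm⟩ := amalg (ι m p hpmem.le) (φ' ⟨p, hpm⟩)
      -- ψ0 : F m →+* K'', e : K →+* K'', ψ0 ∘ ι m p = e ∘ φ' p
      refine ⟨K'', inferInstance, fun i =>
        if h : i = m then ψ0.comp (ι m i (le_of_eq h.symm)) else e.comp (φ' ⟨i, h⟩), ?_⟩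
      intro i j h
      beta_reduce
      by_cases hi : i = m
      · by_cases hj : j = m
        · rw [dif_pos hi, dif_pos hj]
          subst hi; subst hj
          rw [RingHom.comp_assoc, htrans]
        · rw [dif_pos hi, dif_neg hj]
          subst hi
          have hij : i < j := lt_of_le_of_ne h (fun hh => hj hh.symm)
          have hpj : p ≤ j := hpleast j hij
          rw [RingHom.comp_assoc, htrans, ← htrans i p j hpmem.le hpj,
            ← RingHom.comp_assoc, hcomm, RingHom.comp_assoc,
            hφ' ⟨p, hpm⟩ ⟨j, hj⟩ hpj]
      · have hj : j ≠ m := by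
          rintro rfl
          exact hmin i (lt_of_le_of_ne h hi)
        rw [dif_neg hi, dif_neg hj, RingHom.comp_assoc, hφ' ⟨i, hi⟩ ⟨j, hj⟩ h]

/-- A poset of fields over a finite tree poset embeds into a constant
system: there is a field `K` and compatible embeddings `φᵢ : Kᵢ → K`.
Here `ι i j h : F j →+* F i` (for `h : i ≤ j`) records that `K_j ⊆ K_i` when `i ≤ j`. -/
theorem stmt9 {I : Type} [PartialOrder I] [Fintype I] (i0 : I) (hmax : ∀ i : I, i ≤ i0)
    (htree : ∀ i : I, IsChain (· ≤ ·) {j : I | i ≤ j ∧ j ≤ i0})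
    (F : I → Type) [∀ i, Field (F i)]
    (ι : ∀ i j : I, i ≤ j → (F j →+* F i))
    (hrefl : ∀ i : I, ι i i le_rfl = RingHom.id (F i))
    (htrans : ∀ (i j k : I) (hij : i ≤ j) (hjk : j ≤ k),
      (ι i j hij).comp (ι j k hjk) = ι i k (hij.trans hjk)) :
    ∃ (K : Type) (_ : Field K) (φ : ∀ i : I, F i →+* K),
      ∀ (i j : I) (h : i ≤ j), (φ i).comp (ι i j h) = φ j := by
  exact stmt9_aux (Fintype.card I) I le_rfl i0 hmax htree F inferInstance ι hrefl htrans
end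

section
/- Let $E$ be a finite directed graph, $H \subseteq E^0$ a hereditary subset, $e \in E^1$ an edge with $s(e) \notin H$ and $r(e) \in H$, and $K$ a field. Suppose $b_1, \dots, b_m$ are elements of the power series algebra $P_K((E))$ supported on paths starting at $r(e)$, which are $K$-linearly independent, and $a_1, \dots, a_m \in P_K((E))$ are supported on paths entirely inside $E^0 \setminus H$. If $a_i e \ne 0$ for some $i$, then $\sum_{i=1}^m a_i e b_i \ne 0$ in $P_K((E))$. -/
/-- Coefficient functions of formal power series on the paths of a quiver. -/
abbrev SeriesCoef (V : Type) [Quiver.{1} V] (K : Type) := ∀ u w : V, Quiver.Path u w → K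

/-- Auxiliary convolution: `conv a b γ = ∑_{γ = μ·ν} a μ * b ν`. -/
def conv {V K : Type} [Quiver.{1} V] [Semiring K] (a : SeriesCoef V K) :
    ∀ {u w : V}, (∀ p : V, Quiver.Path p w → K) → Quiver.Path u w → K
  | u, _, b, Quiver.Path.nil => a u u Quiver.Path.nil * b u Quiver.Path.nil
  | u, w, b, Quiver.Path.cons δ e =>
      a u w (δ.cons e) * b w Quiver.Path.nil +
        conv a (fun p ν => b p (ν.cons e)) δ

/-- The convolution product on `P_K((E))`. -/
def pmul {V K : Type} [Quiver.{1} V] [Semiring K] (a b : SeriesCoef V K) : SeriesCoef V K :=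
  fun _ w γ => conv a (fun p ν => b p w ν) γ

/-- The power series consisting of the single edge `e` with coefficient `1`. -/
noncomputable def edgeSeries {V K : Type} [Quiver.{1} V] [Semiring K] {x y : V} (e : x ⟶ y) :
    SeriesCoef V K := fun u w γ =>
  letI := Classical.propDecidable
    ((⟨u, w, γ⟩ : (u : V) × (w : V) × Quiver.Path u w) = ⟨x, y, Quiver.Path.nil.cons e⟩)
  if (⟨u, w, γ⟩ : (u : V) × (w : V) × Quiver.Path u w) = ⟨x, y, Quiver.Path.nil.cons e⟩
    then 1 else 0

/-- All vertices visited by a path lie in the set `S`. -/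
def pathIn {V : Type} [Quiver.{1} V] (S : Set V) : ∀ {u w : V}, Quiver.Path u w → Prop
  | u, _, Quiver.Path.nil => u ∈ S
  | _, w, Quiver.Path.cons δ _ => pathIn S δ ∧ w ∈ S

section Aux
open Quiver

variable {V K : Type} [Quiver.{1} V] [Semiring K]

lemma conv_nil (a : SeriesCoef V K) {u : V} (b : ∀ p : V, Quiver.Path p u → K) :
    conv a b Quiver.Path.nil = a u u Quiver.Path.nil * b u Quiver.Path.nil := by
  rw [conv]

lemma conv_cons (a : SeriesCoef V K) {u z w : V} (δ : Quiver.Path u z) (f : z ⟶ w)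
    (b : ∀ p : V, Quiver.Path p w → K) :
    conv a b (δ.cons f) = a u w (δ.cons f) * b w Quiver.Path.nil +
      conv a (fun p ν => b p (ν.cons f)) δ := by
  rw [conv]

lemma pathIn_nil_iff (S : Set V) (u : V) :
    pathIn S (Quiver.Path.nil : Quiver.Path u u) ↔ u ∈ S := by rw [pathIn]

lemma pathIn_cons_iff (S : Set V) {u z w : V} (δ : Quiver.Path u z) (f : z ⟶ w) :
    pathIn S (δ.cons f) ↔ pathIn S δ ∧ w ∈ S := by rw [pathIn]

lemma edgeSeries_self {x y : V} (e : x ⟶ y) :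
    edgeSeries (K := K) e x y (Quiver.Path.nil.cons e) = 1 := by
  simp [edgeSeries]

/-- length of the path component of a triple -/
def triLen {V : Type} [Quiver.{1} V] (s : (u : V) × (w : V) × Quiver.Path u w) : ℕ :=
  s.2.2.length

lemma edgeSeries_ne {x y : V} (e : x ⟶ y) {u w : V} (γ : Quiver.Path u w)
    (h : (⟨u, w, γ⟩ : (u : V) × (w : V) × Quiver.Path u w) ≠ ⟨x, y, Quiver.Path.nil.cons e⟩) :
    edgeSeries (K := K) e u w γ = 0 := by
  simp only [edgeSeries]
  rw [if_neg h]

lemma edgeSeries_ne_of_length {x y : V} (e : x ⟶ y) {u w : V} (γ : Quiver.Path u w)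
    (h : γ.length ≠ 1) : edgeSeries (K := K) e u w γ = 0 := by
  apply edgeSeries_ne
  intro hh
  exact h (congrArg triLen hh)

lemma conv_eq_zero (a : SeriesCoef V K) :
    ∀ {u w : V} (γ : Quiver.Path u w) (b : ∀ p : V, Quiver.Path p w → K),
      (∀ p ν, b p ν = 0) → conv a b γ = 0 := by
  intro u w γ
  induction γ with
  | nil => intro b hb; rw [conv_nil, hb]; simp
  | cons δ f ih =>
    intro b hb
    rw [conv_cons, hb, ih _ (fun p ν => hb p _)]; simp

lemma conv_last (a : SeriesCoef V K) {x : V} {u : V} (γ : Quiver.Path u x)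
    (b : ∀ p : V, Quiver.Path p x → K)
    (hb : ∀ (p z : V) (ρ : Quiver.Path p z) (f : z ⟶ x), b p (ρ.cons f) = 0) :
    conv a b γ = a u x γ * b x Quiver.Path.nil := by
  cases γ with
  | nil => rw [conv_nil]
  | cons δ f =>
    rw [conv_cons, conv_eq_zero a δ _ (fun p ν => hb p _ ν f)]; simp

lemma conv_edge_shift (a' : SeriesCoef V K) {x y : V} (e : x ⟶ y) {u : V}
    (γ : Quiver.Path u x) :
    conv a' (fun p ν => edgeSeries (K := K) e p y (ν.cons e)) γ = a' u x γ := by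
  have hb : ∀ (p z : V) (ρ : Quiver.Path p z) (f : z ⟶ x),
      edgeSeries (K := K) e p y ((ρ.cons f).cons e) = 0 := fun p z ρ f =>
    edgeSeries_ne_of_length e _ (by simp [Quiver.Path.length])
  rw [conv_last a' γ _ hb, edgeSeries_self e]; simp

lemma pmul_edge_cons (a' : SeriesCoef V K) {x y : V} (e : x ⟶ y) {u : V}
    (γ : Quiver.Path u x) :
    pmul a' (edgeSeries e) u y (γ.cons e) = a' u x γ := by
  show conv a' (fun p ν => edgeSeries (K := K) e p y ν) (γ.cons e) = _
  rw [conv_cons, edgeSeries_ne_of_length e _ (by simp [Quiver.Path.length]),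
    conv_edge_shift]
  simp

lemma pmul_edge_supp (a' : SeriesCoef V K) {x y : V} (e : x ⟶ y) {u w : V}
    (μ : Quiver.Path u w) (h : pmul a' (edgeSeries e) u w μ ≠ 0) :
    ∃ γ : Quiver.Path u x,
      (⟨w, μ⟩ : (w : V) × Quiver.Path u w) = ⟨y, γ.cons e⟩ ∧ a' u x γ ≠ 0 := by
  rw [show pmul a' (edgeSeries e) u w μ
      = conv a' (fun p ν => edgeSeries (K := K) e p w ν) μ from rfl] at h
  cases μ with
  | nil =>
    exfalso; apply h
    rw [conv_nil, edgeSeries_ne_of_length e _ (by simp [Quiver.Path.length])]; simp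
  | @cons z _ δ f =>
    rw [conv_cons, edgeSeries_ne_of_length e _ (by simp [Quiver.Path.length])] at h
    have h2 : conv a' (fun p ν => edgeSeries (K := K) e p w (ν.cons f)) δ ≠ 0 := by
      intro hc; apply h; rw [hc]; simp
    by_cases hzf : (⟨z, w, f⟩ : (z : V) × (w : V) × (z ⟶ w)) = ⟨x, y, e⟩
    · obtain ⟨rfl, h3⟩ := Sigma.mk.inj_iff.mp hzf
      obtain ⟨rfl, h4⟩ := Sigma.mk.inj_iff.mp (eq_of_heq h3)
      obtain rfl := eq_of_heq h4
      refine ⟨δ, rfl, ?_⟩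
      rwa [conv_edge_shift] at h2
    · exfalso
      apply h2
      apply conv_eq_zero
      intro p ν
      apply edgeSeries_ne
      intro hh
      obtain ⟨rfl, h3⟩ := Sigma.mk.inj_iff.mp hh
      obtain ⟨rfl, h4⟩ := Sigma.mk.inj_iff.mp (eq_of_heq h3)
      have h5 := eq_of_heq h4
      obtain rfl := Quiver.Path.obj_eq_of_cons_eq_cons h5
      have h7 : f = e := eq_of_heq (Quiver.Path.hom_heq_of_cons_eq_cons h5)
      exact hzf (by rw [h7])

lemma pathIn_comp_left (S : Set V) {p q r : V} (ρ : Quiver.Path p q) :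
    ∀ (σ : Quiver.Path q r), pathIn S (ρ.comp σ) → pathIn S ρ := by
  intro σ
  induction σ with
  | nil => exact id
  | cons σ' g ih =>
    intro h
    rw [show ρ.comp (σ'.cons g) = (ρ.comp σ').cons g from rfl, pathIn_cons_iff] at h
    exact ih h.1

lemma conv_cross_zero (H : Set V) (c : SeriesCoef V K)
    (hc : ∀ (u w : V) (μ : Quiver.Path u w), c u w μ ≠ 0 →
      ∃ (z : V) (ρ : Quiver.Path u z) (f : z ⟶ w),
        μ = ρ.cons f ∧ pathIn Hᶜ ρ ∧ w ∈ H) :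
    ∀ {u w : V} (ρ : Quiver.Path u w), pathIn Hᶜ ρ →
      ∀ (b : ∀ p : V, Quiver.Path p w → K), conv c b ρ = 0 := by
  intro u w ρ
  induction ρ with
  | nil =>
    intro _ b
    have h0 : c u u Quiver.Path.nil = 0 := by
      by_contra hcc
      obtain ⟨z, ρ, f, hμ, -⟩ := hc _ _ _ hcc
      exact absurd (congrArg Quiver.Path.length hμ) (by simp [Quiver.Path.length])
    rw [conv_nil, h0]; simp
  | @cons z _ δ f ih =>
    intro hρ b
    rw [pathIn_cons_iff] at hρ
    have h1 : c u _ (δ.cons f) = 0 := by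
      by_contra hcc
      obtain ⟨z', ρ', f', hμ, -, hw⟩ := hc _ _ _ hcc
      exact hρ.2 hw
    rw [conv_cons, h1, ih hρ.1]; simp

lemma conv_cross (H : Set V) (c : SeriesCoef V K)
    (hc : ∀ (u w : V) (μ : Quiver.Path u w), c u w μ ≠ 0 →
      ∃ (z : V) (ρ : Quiver.Path u z) (f : z ⟶ w),
        μ = ρ.cons f ∧ pathIn Hᶜ ρ ∧ w ∈ H)
    {x y : V} (e : x ⟶ y) (hy : y ∈ H) {u : V} (δ : Quiver.Path u x)
    (hδ : pathIn Hᶜ δ) :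
    ∀ {w : V} (ν : Quiver.Path y w) (b : ∀ p : V, Quiver.Path p w → K),
      conv c b ((δ.cons e).comp ν) = c u y (δ.cons e) * b y ν := by
  intro w ν
  induction ν with
  | nil =>
    intro b
    rw [show (δ.cons e).comp Quiver.Path.nil = δ.cons e from rfl, conv_cons,
      conv_cross_zero H c hc δ hδ]
    simp
  | @cons z _ ν' g ih =>
    intro b
    rw [show (δ.cons e).comp (ν'.cons g) = ((δ.cons e).comp ν').cons g from rfl, conv_cons]
    have h1 : c u _ (((δ.cons e).comp ν').cons g) = 0 := by
      by_contra hcc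
      obtain ⟨z', ρ', f', hμ, hρ', -⟩ := hc _ _ _ hcc
      obtain rfl := Quiver.Path.obj_eq_of_cons_eq_cons hμ
      obtain rfl : ((δ.cons e).comp ν') = ρ' :=
        eq_of_heq (Quiver.Path.heq_of_cons_eq_cons hμ)
      have h2 := pathIn_comp_left Hᶜ (δ.cons e) ν' hρ'
      rw [pathIn_cons_iff] at h2
      exact h2.2 hy
    rw [h1, ih (fun p ρ => b p (ρ.cons g))]; simp

end Aux

/-- let `H` be hereditary, `e : x ⟶ y` a crossing edge (`x ∉ H`, `y ∈ H`),
`b i` power series supported on paths starting at `y` which are `K`-linearly independent,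
and `a i` power series supported on paths entirely inside `E⁰ \ H`. If some `aᵢ e ≠ 0`,
then `∑ᵢ aᵢ e bᵢ ≠ 0` in `P_K((E))`. -/
theorem stmt12 {V K : Type} [Quiver.{1} V] [Fintype V] [∀ u w : V, Fintype (u ⟶ w)] [Field K]
    (H : Set V) (hH : ∀ (u w : V) (f : u ⟶ w), u ∈ H → w ∈ H)
    {x y : V} (e : x ⟶ y) (hx : x ∉ H) (hy : y ∈ H)
    {m : ℕ} (b : Fin m → SeriesCoef V K)
    (hbsupp : ∀ (i : Fin m) (u w : V) (γ : Quiver.Path u w), b i u w γ ≠ 0 → u = y)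
    (hbind : LinearIndependent K b)
    (a : Fin m → SeriesCoef V K)
    (hasupp : ∀ (i : Fin m) (u w : V) (γ : Quiver.Path u w), a i u w γ ≠ 0 → pathIn Hᶜ γ)
    (hne : ∃ i : Fin m, pmul (a i) (edgeSeries e) ≠ 0) :
    ∑ i : Fin m, pmul (pmul (a i) (edgeSeries e)) (b i) ≠ 0 := by
  intro hzero
  obtain ⟨i₀, hi₀⟩ := hne
  have hex : ∃ (u w : V) (μ : Quiver.Path u w), pmul (a i₀) (edgeSeries e) u w μ ≠ 0 := by
    by_contra hcon
    push_neg at hcon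
    exact hi₀ (by funext u w μ; exact hcon u w μ)
  obtain ⟨u, w, μ, hμ⟩ := hex
  obtain ⟨γ, hsig, hγ⟩ := pmul_edge_supp (a i₀) e μ hμ
  have hγin : pathIn Hᶜ γ := hasupp i₀ u x γ hγ
  have hc : ∀ (i : Fin m) (u' w' : V) (μ' : Quiver.Path u' w'),
      pmul (a i) (edgeSeries e) u' w' μ' ≠ 0 →
      ∃ (z : V) (ρ : Quiver.Path u' z) (f : z ⟶ w'),
        μ' = ρ.cons f ∧ pathIn Hᶜ ρ ∧ w' ∈ H := by
    intro i u' w' μ' h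
    obtain ⟨γ', hs, hγ'⟩ := pmul_edge_supp (a i) e μ' h
    obtain ⟨rfl, h2⟩ := Sigma.mk.inj_iff.mp hs
    obtain rfl := eq_of_heq h2
    exact ⟨x, γ', e, rfl, hasupp i u' x γ' hγ', hy⟩
  have key : ∀ (p w' : V) (ν : Quiver.Path p w'),
      (∑ i : Fin m, a i u x γ * b i p w' ν) = 0 := by
    intro p w' ν
    by_cases hp : p = y
    · subst hp
      have h1 := congrFun (congrFun (congrFun hzero u) w') ((γ.cons e).comp ν)
      simp only [Finset.sum_apply, Pi.zero_apply] at h1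
      rw [← h1]
      apply Finset.sum_congr rfl
      intro i _
      have h2 := conv_cross H (pmul (a i) (edgeSeries e)) (hc i) e hy γ hγin ν
        (fun p ρ => b i p w' ρ)
      rw [show pmul (pmul (a i) (edgeSeries e)) (b i) u w' ((γ.cons e).comp ν)
          = conv (pmul (a i) (edgeSeries e)) (fun p ρ => b i p w' ρ) ((γ.cons e).comp ν)
          from rfl, h2, pmul_edge_cons]
    · have hb0 : ∀ i : Fin m, b i p w' ν = 0 := fun i => by
        by_contra hbb; exact hp (hbsupp i p w' ν hbb)
      simp [hb0]
  have hsum : (∑ i : Fin m, (a i u x γ) • b i) = 0 := by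
    funext p w' ν
    simp only [Finset.sum_apply, Pi.smul_apply, smul_eq_mul, Pi.zero_apply]
    exact key p w' ν
  exact hγ (Fintype.linearIndependent_iff.mp hbind _ hsum i₀)
end
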